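/- Let G be a K₄-free 4-critical graph with L(G) = {3, k}, k = 3+2l, l ≥ 2, and let C be a k-cycle in G with at least two diagonals (chords). Then the induced subgraph on V(C) consists of C together with exactly two chords, and these two chords are of the form v₀v₂ and v₁v₃ for consecutive vertices v₀, v₁, v₂, v₃ of C. -/

import Mathlib

open SimpleGraph

/-- The set of lengths of odd cycles of `G`. -/
def oddCycleLengths {V : Type*} (G : SimpleGraph V) : Set ℕ :=
  {n | Odd n ∧ ∃ (u : V) (w : G.Walk u u), w.IsCycle ∧ w.length = n}

/-- `G` is 4-critical. -/
def IsFourCritical {V : Type*} (G : SimpleGraph V) : Prop :=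
  G.chromaticNumber = 4 ∧ ∀ H : SimpleGraph V, H < G → H.chromaticNumber ≤ 3

/-- A chord (diagonal) of the cycle `f : ZMod n → V`: an edge of `G` between two
non-consecutive vertices of the cycle. -/
def IsChord {V : Type*} {n : ℕ} (G : SimpleGraph V) (f : ZMod n → V) (a b : ZMod n) : Prop :=
  G.Adj (f a) (f b) ∧ b ≠ a + 1 ∧ a ≠ b + 1

namespace Stmt5Aux

variable {V : Type*} {G : SimpleGraph V} {n : ℕ} {f : ZMod n → V}

lemma cast_eq_cast {k s t : ℕ} (h : (s : ZMod k) = (t : ZMod k)) (hs1 : 1 ≤ s) (hsk : s ≤ k)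
    (ht1 : 1 ≤ t) (htk : t ≤ k) : s = t := by
  have h' : s ≡ t [MOD k] := (ZMod.natCast_eq_natCast_iff _ _ _).mp h
  rcases le_total s t with hle | hle
  · have hd : k ∣ t - s := (Nat.modEq_iff_dvd' hle).mp h'
    have : t - s = 0 := Nat.eq_zero_of_dvd_of_lt hd (by omega)
    omega
  · have hd : k ∣ s - t := (Nat.modEq_iff_dvd' hle).mp h'.symm
    have : s - t = 0 := Nat.eq_zero_of_dvd_of_lt hd (by omega)
    omega

lemma cast_inj_lt {k x y : ℕ} (h : (x : ZMod k) = (y : ZMod k)) (hx : x < k) (hy : y < k) :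
    x = y := by
  have := (ZMod.natCast_eq_natCast_iff' _ _ _).mp h
  rwa [Nat.mod_eq_of_lt hx, Nat.mod_eq_of_lt hy] at this

/-- The walk along the cycle from `f a` of length `d`. -/
def walkAlong (hcyc : ∀ i, G.Adj (f i) (f (i + 1))) :
    (a : ZMod n) → (d : ℕ) → G.Walk (f a) (f (a + (d : ZMod n)))
  | a, 0 => Walk.nil.copy rfl (congrArg f (by push_cast; ring))
  | a, d + 1 =>
      Walk.cons (hcyc a) ((walkAlong hcyc (a + 1) d).copy rfl (congrArg f (by push_cast; ring)))

lemma length_walkAlong (hcyc : ∀ i, G.Adj (f i) (f (i + 1))) (a : ZMod n) (d : ℕ) :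
    (walkAlong hcyc a d).length = d := by
  induction d generalizing a with
  | zero => simp [walkAlong]
  | succ d ih => simp [walkAlong, ih]

lemma support_walkAlong (hcyc : ∀ i, G.Adj (f i) (f (i + 1))) (a : ZMod n) (d : ℕ) :
    (walkAlong hcyc a d).support = (List.range (d + 1)).map (fun i : ℕ => f (a + (i : ZMod n))) := by
  induction d generalizing a with
  | zero =>
      rw [show walkAlong hcyc a 0 = Walk.nil.copy rfl (congrArg f (by push_cast; ring)) from rfl]
      simp [List.range_succ]
  | succ d ih =>
      rw [show walkAlong hcyc a (d + 1) = Walk.cons (hcyc a)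
        ((walkAlong hcyc (a + 1) d).copy rfl (congrArg f (by push_cast; ring))) from rfl]
      rw [Walk.support_cons, Walk.support_copy, ih]
      conv_rhs => rw [List.range_succ_eq_map, List.map_cons, List.map_map]
      congr 1
      · norm_num
      · refine List.map_congr_left fun i hi => ?_
        show f (a + 1 + (i : ZMod n)) = f (a + ((i + 1 : ℕ) : ZMod n))
        exact congrArg f (by push_cast; ring)

lemma edges_walkAlong (hcyc : ∀ i, G.Adj (f i) (f (i + 1))) (a : ZMod n) (d : ℕ) :
    ∀ e ∈ (walkAlong hcyc a d).edges,
      ∃ i : ℕ, i < d ∧ e = s(f (a + (i : ZMod n)), f (a + (i : ZMod n) + 1)) := by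
  induction d generalizing a with
  | zero => simp [walkAlong]
  | succ d ih =>
      intro e he
      rw [show walkAlong hcyc a (d + 1) = Walk.cons (hcyc a)
        ((walkAlong hcyc (a + 1) d).copy rfl (congrArg f (by push_cast; ring))) from rfl] at he
      rw [Walk.edges_cons, Walk.edges_copy, List.mem_cons] at he
      rcases he with rfl | he
      · exact ⟨0, by omega, by norm_num⟩
      · obtain ⟨i, hi, rfl⟩ := ih (a + 1) e he
        refine ⟨i + 1, by omega, ?_⟩
        rw [show a + ((i + 1 : ℕ) : ZMod n) = a + 1 + (i : ZMod n) from by push_cast; ring]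

/-- A chord of "span" `d` produces a cycle of length `d+1`. -/
lemma chord_cycle (hcyc : ∀ i, G.Adj (f i) (f (i + 1))) (hf : Function.Injective f)
    (a : ZMod n) (d : ℕ) (hd2 : 2 ≤ d) (hdk : d + 2 ≤ n)
    (hadj : G.Adj (f a) (f (a + (d : ZMod n)))) :
    ∃ (u : V) (w : G.Walk u u), w.IsCycle ∧ w.length = d + 1 := by
  refine ⟨f (a + (d : ZMod n)), Walk.cons hadj.symm (walkAlong hcyc a d), ?_, by
    simp [length_walkAlong]⟩
  rw [Walk.cons_isCycle_iff]
  constructor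
  · rw [Walk.isPath_def, support_walkAlong]
    refine List.Nodup.map_on ?_ List.nodup_range
    intro x hx y hy hxy
    rw [List.mem_range] at hx hy
    have hxy' : ((x : ℕ) : ZMod n) = ((y : ℕ) : ZMod n) := by
      linear_combination hf hxy
    exact cast_inj_lt hxy' (by omega) (by omega)
  · intro hmem
    obtain ⟨i, hi, he⟩ := edges_walkAlong hcyc a d _ hmem
    rw [Sym2.eq_iff] at he
    rcases he with ⟨h1, h2⟩ | ⟨h1, h2⟩
    · -- f (a+d) = f (a+i)  and  f a = f (a+i+1)
      have hc : ((i + 1 : ℕ) : ZMod n) = 0 := by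
        push_cast
        linear_combination -(hf h2)
      rw [ZMod.natCast_eq_zero_iff] at hc
      have := Nat.le_of_dvd (by omega) hc
      omega
    · -- f (a+d) = f (a+i+1)  and  f a = f (a+i)
      have hc : ((i : ℕ) : ZMod n) = 0 := by
        linear_combination -(hf h2)
      rw [ZMod.natCast_eq_zero_iff] at hc
      rcases Nat.eq_zero_or_pos i with rfl | hpos
      · -- f (a+d) = f (a + 0 + 1)
        have hd1 : ((d : ℕ) : ZMod n) = ((1 : ℕ) : ZMod n) := by
          push_cast
          linear_combination hf h1
        have := cast_inj_lt hd1 (by omega) (by omega)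
        omega
      · have := Nat.le_of_dvd hpos hc
        omega

section Main

variable {V : Type*} {G : SimpleGraph V} {l : ℕ}

/-- Every chord of the cycle has span 2. -/
lemma short_chord (hl : 2 ≤ l) (hL : oddCycleLengths G = {3, 3 + 2 * l})
    {f : ZMod (3 + 2 * l) → V} (hf : Function.Injective f)
    (hcyc : ∀ i, G.Adj (f i) (f (i + 1)))
    {a b : ZMod (3 + 2 * l)} (hc : IsChord G f a b) :
    b = a + 2 ∨ a = b + 2 := by
  haveI : NeZero (3 + 2 * l) := ⟨by omega⟩
  obtain ⟨hadj, hba, hab⟩ := hc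
  have hane : a ≠ b := fun h => hadj.ne (by rw [h])
  set d := (b - a).val with hd
  set e := (a - b).val with he
  have hdlt : d < 3 + 2 * l := ZMod.val_lt _
  have helt : e < 3 + 2 * l := ZMod.val_lt _
  have hdcast : ((d : ℕ) : ZMod (3 + 2 * l)) = b - a := ZMod.natCast_rightInverse _
  have hecast : ((e : ℕ) : ZMod (3 + 2 * l)) = a - b := ZMod.natCast_rightInverse _
  have hd0 : d ≠ 0 := by
    intro h
    have : b - a = 0 := by rw [← hdcast, h]; norm_num
    exact hane (sub_eq_zero.mp this).symm
  have he0 : e ≠ 0 := by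
    intro h
    have : a - b = 0 := by rw [← hecast, h]; norm_num
    exact hane (sub_eq_zero.mp this)
  have hd1 : d ≠ 1 := by
    intro h
    have h2 : b - a = ((1 : ℕ) : ZMod (3 + 2 * l)) := by rw [← hdcast, h]
    exact hba (by push_cast at h2; linear_combination h2)
  have he1 : e ≠ 1 := by
    intro h
    have h2 : a - b = ((1 : ℕ) : ZMod (3 + 2 * l)) := by rw [← hecast, h]
    exact hab (by push_cast at h2; linear_combination h2)
  have hde : d + e = 3 + 2 * l := by
    have h2 : ((d + e : ℕ) : ZMod (3 + 2 * l)) = 0 := by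
      push_cast
      rw [hdcast, hecast]; ring
    rw [ZMod.natCast_eq_zero_iff] at h2
    exact Nat.eq_of_dvd_of_lt_two_mul (by omega) h2 (by omega)
  have hb : b = a + ((d : ℕ) : ZMod (3 + 2 * l)) := by rw [hdcast]; ring
  have ha : a = b + ((e : ℕ) : ZMod (3 + 2 * l)) := by rw [hecast]; ring
  have hodd : Odd (d + 1) ∨ Odd (e + 1) := by
    rw [Nat.odd_iff, Nat.odd_iff]; omega
  rcases hodd with h | h
  · obtain ⟨u, w, hw, hwl⟩ := chord_cycle hcyc hf a d (by omega) (by omega)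
      (by rw [← hb]; exact hadj)
    have hmem : (d + 1) ∈ oddCycleLengths G := ⟨h, u, w, hw, hwl⟩
    rw [hL] at hmem
    simp only [Set.mem_insert_iff, Set.mem_singleton_iff] at hmem
    have hd2 : d = 2 := by omega
    left
    rw [hb, hd2]; norm_num
  · obtain ⟨u, w, hw, hwl⟩ := chord_cycle hcyc hf b e (by omega) (by omega)
      (by rw [← ha]; exact hadj.symm)
    have hmem : (e + 1) ∈ oddCycleLengths G := ⟨h, u, w, hw, hwl⟩
    rw [hL] at hmem
    simp only [Set.mem_insert_iff, Set.mem_singleton_iff] at hmem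
    have he2 : e = 2 := by omega
    right
    rw [ha, he2]; norm_num

/-- Two span-2 chords at positions differing by `m`, `2 ≤ m ≤ n-2`, are impossible. -/
lemma no_far_chords (hl : 2 ≤ l) (hL : oddCycleLengths G = {3, 3 + 2 * l})
    {f : ZMod (3 + 2 * l) → V} (hf : Function.Injective f)
    (hcyc : ∀ i, G.Adj (f i) (f (i + 1)))
    {a : ZMod (3 + 2 * l)} (m : ℕ) (hm2 : 2 ≤ m) (hmk : m + 2 ≤ 3 + 2 * l)
    (h1 : G.Adj (f a) (f (a + 2)))
    (h2 : G.Adj (f (a + (m : ZMod (3 + 2 * l)))) (f (a + (m : ZMod (3 + 2 * l)) + 2))) :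
    False := by
  haveI : NeZero (3 + 2 * l) := ⟨by omega⟩
  have hp_end : f (a + 2 + ((m - 2 : ℕ) : ZMod (3 + 2 * l)))
      = f (a + (m : ZMod (3 + 2 * l))) := congrArg f (by
    rw [Nat.cast_sub hm2]; push_cast; ring)
  have hq_end : f (a + (m : ZMod (3 + 2 * l)) + 2 + ((3 + 2 * l - m - 2 : ℕ) : ZMod (3 + 2 * l)))
      = f a := congrArg f (by
    have hsub : 3 + 2 * l - m - 2 = 3 + 2 * l - (m + 2) := by omega
    rw [hsub, Nat.cast_sub hmk, ZMod.natCast_self]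
    push_cast; ring)
  obtain ⟨u, w, hwc, hwl⟩ : ∃ (u : V) (w : G.Walk u u), w.IsCycle ∧ w.length = 3 + 2 * l - 2 := by
    refine ⟨f a, Walk.cons h1 (((walkAlong hcyc (a + 2) (m - 2)).copy rfl hp_end).append
      (Walk.cons h2 ((walkAlong hcyc (a + (m : ZMod (3 + 2 * l)) + 2)
        (3 + 2 * l - m - 2)).copy rfl hq_end))), ?_, ?_⟩
    · rw [Walk.cons_isCycle_iff]
      constructor
      · rw [Walk.isPath_def, Walk.support_append, Walk.support_copy, support_walkAlong,
          Walk.support_cons, List.tail_cons, Walk.support_copy, support_walkAlong,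
          List.nodup_append]
        refine ⟨?_, ?_, ?_⟩
        · refine List.Nodup.map_on ?_ List.nodup_range
          intro x hx y hy hxy
          rw [List.mem_range] at hx hy
          have hxy' : ((x : ℕ) : ZMod (3 + 2 * l)) = ((y : ℕ) : ZMod (3 + 2 * l)) := by
            linear_combination hf hxy
          exact cast_inj_lt hxy' (by omega) (by omega)
        · refine List.Nodup.map_on ?_ List.nodup_range
          intro x hx y hy hxy
          rw [List.mem_range] at hx hy
          have hxy' : ((x : ℕ) : ZMod (3 + 2 * l)) = ((y : ℕ) : ZMod (3 + 2 * l)) := by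
            linear_combination hf hxy
          exact cast_inj_lt hxy' (by omega) (by omega)
        · intro v hv1 v' hv2 hvv; subst hvv
          simp only [List.mem_map, List.mem_range] at hv1 hv2
          obtain ⟨x, hx, rfl⟩ := hv1
          obtain ⟨y, hy, hxy⟩ := hv2
          have hxy' : ((m + 2 + y : ℕ) : ZMod (3 + 2 * l)) = ((x + 2 : ℕ) : ZMod (3 + 2 * l)) := by
            push_cast
            linear_combination hf hxy
          have := cast_eq_cast hxy' (by omega) (by omega) (by omega) (by omega)
          omega
      · intro hmem
        rw [Walk.edges_append, Walk.edges_copy, Walk.edges_cons, Walk.edges_copy,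
          List.mem_append, List.mem_cons] at hmem
        rcases hmem with hmem | hmem | hmem
        · obtain ⟨i, hi, heq⟩ := edges_walkAlong hcyc (a + 2) (m - 2) _ hmem
          rw [Sym2.eq_iff] at heq
          rcases heq with ⟨hA, hB⟩ | ⟨hA, hB⟩
          · have hc : ((i + 2 : ℕ) : ZMod (3 + 2 * l)) = 0 := by
              push_cast
              linear_combination -(hf hA)
            rw [ZMod.natCast_eq_zero_iff] at hc
            have := Nat.le_of_dvd (by omega) hc
            omega
          · have hc : ((i + 3 : ℕ) : ZMod (3 + 2 * l)) = 0 := by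
              push_cast
              linear_combination -(hf hA)
            rw [ZMod.natCast_eq_zero_iff] at hc
            have := Nat.le_of_dvd (by omega) hc
            omega
        · rw [Sym2.eq_iff] at hmem
          rcases hmem with ⟨hA, hB⟩ | ⟨hA, hB⟩
          · have hc : ((m : ℕ) : ZMod (3 + 2 * l)) = 0 := by
              linear_combination -(hf hA)
            rw [ZMod.natCast_eq_zero_iff] at hc
            have := Nat.le_of_dvd (by omega) hc
            omega
          · have hc : ((m : ℕ) : ZMod (3 + 2 * l)) = ((2 : ℕ) : ZMod (3 + 2 * l)) := by
              push_cast
              linear_combination -(hf hB)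
            have hm2' := cast_inj_lt hc (by omega) (by omega)
            have hc2 : ((m + 2 : ℕ) : ZMod (3 + 2 * l)) = 0 := by
              push_cast
              linear_combination -(hf hA)
            rw [ZMod.natCast_eq_zero_iff] at hc2
            have := Nat.le_of_dvd (by omega) hc2
            omega
        · obtain ⟨i, hi, heq⟩ := edges_walkAlong hcyc (a + (m : ZMod (3 + 2 * l)) + 2)
            (3 + 2 * l - m - 2) _ hmem
          rw [Sym2.eq_iff] at heq
          rcases heq with ⟨hA, hB⟩ | ⟨hA, hB⟩
          · have hc : ((m + 2 + i : ℕ) : ZMod (3 + 2 * l)) = 0 := by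
              push_cast
              linear_combination -(hf hA)
            rw [ZMod.natCast_eq_zero_iff] at hc
            have := Nat.le_of_dvd (by omega) hc
            omega
          · have hc : ((m + i : ℕ) : ZMod (3 + 2 * l)) = 0 := by
              push_cast
              linear_combination -(hf hB)
            rw [ZMod.natCast_eq_zero_iff] at hc
            have := Nat.le_of_dvd (by omega) hc
            omega
    · simp only [Walk.length_cons, Walk.length_append, Walk.length_copy, length_walkAlong]
      omega
  have hmem : (3 + 2 * l - 2) ∈ oddCycleLengths G :=
    ⟨by rw [Nat.odd_iff]; omega, u, w, hwc, hwl⟩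
  rw [hL] at hmem
  simp only [Set.mem_insert_iff, Set.mem_singleton_iff] at hmem
  omega

end Main

end Stmt5Aux

open Stmt5Aux in
theorem stmt5 {V : Type*} [Fintype V] (G : SimpleGraph V) (l : ℕ) (hl : 2 ≤ l)
    (hK4 : G.CliqueFree 4)
    (hcrit : IsFourCritical G)
    (hL : oddCycleLengths G = {3, 3 + 2 * l})
    -- `C` is a `k`-cycle of `G`, `k = 3 + 2l`, given as an injective cyclic sequence
    (f : ZMod (3 + 2 * l) → V) (hf : Function.Injective f)
    (hcyc : ∀ i, G.Adj (f i) (f (i + 1)))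
    -- `C` has at least two chords
    (hchords : ∃ a b a' b' : ZMod (3 + 2 * l),
      IsChord G f a b ∧ IsChord G f a' b' ∧ s(f a, f b) ≠ s(f a', f b')) :
    ∃ i : ZMod (3 + 2 * l),
      G.Adj (f i) (f (i + 2)) ∧ G.Adj (f (i + 1)) (f (i + 3)) ∧
      ∀ a b, IsChord G f a b →
        s(f a, f b) = s(f i, f (i + 2)) ∨ s(f a, f b) = s(f (i + 1), f (i + 3)) := by
  haveI : NeZero (3 + 2 * l) := ⟨by omega⟩
  have posOf : ∀ a b : ZMod (3 + 2 * l), IsChord G f a b →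
      ∃ p : ZMod (3 + 2 * l), s(f a, f b) = s(f p, f (p + 2)) ∧ G.Adj (f p) (f (p + 2)) := by
    intro a b hc
    rcases short_chord hl hL hf hcyc hc with hb | ha
    · exact ⟨a, by rw [hb], by rw [← hb]; exact hc.1⟩
    · refine ⟨b, ?_, by rw [← ha]; exact hc.1.symm⟩
      rw [ha]
      exact Sym2.eq_swap
  have near : ∀ p q : ZMod (3 + 2 * l), G.Adj (f p) (f (p + 2)) → G.Adj (f q) (f (q + 2)) →
      q = p ∨ q = p + 1 ∨ p = q + 1 := by
    intro p q hp hq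
    by_contra hcon
    push_neg at hcon
    obtain ⟨h0, h1, h2⟩ := hcon
    set m := (q - p).val with hm
    have hmlt : m < 3 + 2 * l := ZMod.val_lt _
    have hcast : ((m : ℕ) : ZMod (3 + 2 * l)) = q - p := ZMod.natCast_rightInverse _
    have hm0 : m ≠ 0 := by
      intro h
      have hz : q - p = 0 := by rw [← hcast, h]; norm_num
      exact h0 (by linear_combination hz)
    have hm1 : m ≠ 1 := by
      intro h
      have h2' : q - p = ((1 : ℕ) : ZMod (3 + 2 * l)) := by rw [← hcast, h]
      exact h1 (by push_cast at h2'; linear_combination h2')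
    have hmn1 : m ≠ 3 + 2 * l - 1 := by
      intro h
      have h2' : q - p = ((3 + 2 * l - 1 : ℕ) : ZMod (3 + 2 * l)) := by rw [← hcast, h]
      have h3 : ((3 + 2 * l - 1 : ℕ) : ZMod (3 + 2 * l)) + 1 = 0 := by
        have hx : (3 + 2 * l - 1) + 1 = 3 + 2 * l := by omega
        calc ((3 + 2 * l - 1 : ℕ) : ZMod (3 + 2 * l)) + 1
            = (((3 + 2 * l - 1) + 1 : ℕ) : ZMod (3 + 2 * l)) := by rw [Nat.cast_add, Nat.cast_one]
          _ = 0 := by rw [hx, ZMod.natCast_self]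
      exact h2 (by linear_combination -h2' - h3)
    have hq' : q = p + ((m : ℕ) : ZMod (3 + 2 * l)) := by rw [hcast]; ring
    rw [hq'] at hq
    exact no_far_chords hl hL hf hcyc m (by omega) (by omega) hp hq
  have small : ∀ c : ℕ, 0 < c → c < 3 + 2 * l → ((c : ℕ) : ZMod (3 + 2 * l)) ≠ 0 := by
    intro c hc1 hc2 h
    rw [ZMod.natCast_eq_zero_iff] at h
    have := Nat.le_of_dvd hc1 h
    omega
  obtain ⟨a, b, a', b', hc1, hc2, hne⟩ := hchords
  obtain ⟨p1, he1, ha1⟩ := posOf a b hc1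
  obtain ⟨p2, he2, ha2⟩ := posOf a' b' hc2
  have hp12 : p1 ≠ p2 := by
    rintro rfl
    exact hne (he1.trans he2.symm)
  obtain ⟨i, hAi, hBi⟩ : ∃ i : ZMod (3 + 2 * l),
      G.Adj (f i) (f (i + 2)) ∧ G.Adj (f (i + 1)) (f (i + 1 + 2)) := by
    rcases near p1 p2 ha1 ha2 with h | h | h
    · exact absurd h.symm hp12
    · exact ⟨p1, ha1, by rw [← h]; exact ha2⟩
    · exact ⟨p2, ha2, by rw [← h]; exact ha1⟩
  have h13 : i + 1 + 2 = i + 3 := by ring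
  refine ⟨i, hAi, by rw [← h13]; exact hBi, ?_⟩
  intro x y hcxy
  obtain ⟨p, hep, hap⟩ := posOf x y hcxy
  rcases near i p hAi hap with h | h | h
  · left; rw [hep, h]
  · right; rw [hep, h, ← h13]
  · rcases near (i + 1) p hBi hap with h' | h' | h'
    · exfalso
      rw [h'] at h
      refine small 2 (by norm_num) (by omega) ?_
      push_cast
      linear_combination -h
    · exfalso
      rw [h'] at h
      refine small 3 (by norm_num) (by omega) ?_
      push_cast
      linear_combination -h
    · exfalso
      have hip : i = p := add_right_cancel h'
      rw [← hip] at h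
      refine small 1 (by norm_num) (by omega) ?_
      push_cast
      linear_combination -h
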